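/- For every R ∈ (0,1) and every integer N ≥ 1, the quantity η_{N,R} = N ∑_{k=N+1}^∞ cos(2πkR)/k² satisfies |η_{N,R}| ≤ min( 1, (2 + π³/8) / (|sin(πR)| · N) ). -/

import Mathlib

open Real Finset

/-- For every `R ∈ (0,1)` and integer `N ≥ 1`, the quantity
`η_{N,R} = N ∑_{k=N+1}^∞ cos(2πkR)/k²` satisfies
`|η_{N,R}| ≤ min(1, (2 + π³/8)/(|sin(πR)|·N))`. -/
theorem etaNR_bound (R : ℝ) (hR : R ∈ Set.Ioo (0 : ℝ) 1) (N : ℕ) (hN : 1 ≤ N) :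
    |(N : ℝ) * ∑' k : ℕ,
        Real.cos (2 * π * ((N : ℝ) + 1 + (k : ℝ)) * R) / ((N : ℝ) + 1 + (k : ℝ)) ^ 2| ≤
      min 1 ((2 + π ^ 3 / 8) / (|Real.sin (π * R)| * (N : ℝ))) := by
  obtain ⟨hR0, hR1⟩ := hR
  have hNR : (1:ℝ) ≤ (N:ℝ) := by exact_mod_cast hN
  have hNpos : (0:ℝ) < N := by linarith
  set s := Real.sin (π * R) with hs_def
  have hs : 0 < s := Real.sin_pos_of_pos_of_lt_pi (by positivity)
    (by nlinarith [Real.pi_pos])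
  set f : ℕ → ℝ := fun k =>
    Real.cos (2 * π * ((N : ℝ) + 1 + (k : ℝ)) * R) / ((N : ℝ) + 1 + (k : ℝ)) ^ 2 with hf_def
  -- positivity facts
  have hck : ∀ k : ℕ, (0:ℝ) < (N:ℝ) + 1 + k := by intro k; positivity
  have hck' : ∀ k : ℕ, (0:ℝ) < (N:ℝ) + k := by
    intro k; have := hNpos; positivity
  -- pointwise absolute bound
  have habs : ∀ k : ℕ, |f k| ≤ 1 / ((N:ℝ) + 1 + k) ^ 2 := by
    intro k
    rw [hf_def]
    simp only [abs_div, abs_pow, abs_of_pos (hck k)]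
    rw [div_le_div_iff_of_pos_right (by positivity)]
    exact abs_cos_le_one _
  -- summability
  have hsum : Summable f := by
    apply Summable.of_abs
    apply Summable.of_nonneg_of_le (fun k => abs_nonneg _) habs
    have h0 : Summable (fun k : ℕ => 1 / ((k : ℝ) + ((N:ℝ)+1)) ^ 2) := by
      have := (summable_nat_add_iff (f := fun n : ℕ => 1 / (n:ℝ)^2) (N+1)).mpr
        (by simpa using Real.summable_one_div_nat_pow.mpr one_lt_two)
      apply this.congr
      intro k; push_cast; ring_nf
    apply h0.congr
    intro k; ring_nf
  -- telescoping bound 1 : partial sums of |f| ≤ 1/N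
  have hbound1 : ∀ M : ℕ, |∑ k ∈ range M, f k| ≤ 1 / N := by
    intro M
    calc |∑ k ∈ range M, f k| ≤ ∑ k ∈ range M, |f k| := Finset.abs_sum_le_sum_abs _ _
      _ ≤ ∑ k ∈ range M, (1/((N:ℝ)+k) - 1/((N:ℝ)+(k+1))) := by
          apply Finset.sum_le_sum
          intro k _
          refine (habs k).trans ?_
          have h1 := hck' k
          have h2 : ((N:ℝ)+k) ≠ 0 := ne_of_gt h1
          have h3 : ((N:ℝ)+(k+1)) ≠ 0 := by positivity
          rw [div_sub_div _ _ h2 h3, div_le_div_iff₀ (by positivity) (by positivity)]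
          nlinarith
      _ = 1/((N:ℝ)+(0:ℕ)) - 1/((N:ℝ)+M) := by
          rw [← Finset.sum_range_sub' (fun k : ℕ => 1/((N:ℝ)+k)) M]
          apply Finset.sum_congr rfl
          intro k _; push_cast; ring_nf
      _ ≤ 1 / N := by
          push_cast
          simp only [add_zero]
          have := hck' M
          have h1 : 0 < 1/((N:ℝ)+M) := by positivity
          linarith
  -- key trig identity
  have key : ∀ k : ℕ,
      Real.sin ((2*((N:ℝ)+(k+1))+1)*π*R) - Real.sin ((2*((N:ℝ)+k)+1)*π*R)
        = 2 * s * Real.cos (2*π*((N:ℝ)+1+k)*R) := by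
    intro k
    rw [Real.sin_sub_sin]
    have e1 : ((2*((N:ℝ)+(k+1))+1)*π*R - (2*((N:ℝ)+k)+1)*π*R)/2 = π * R := by ring
    have e2 : ((2*((N:ℝ)+(k+1))+1)*π*R + (2*((N:ℝ)+k)+1)*π*R)/2 = 2*π*((N:ℝ)+1+k)*R := by ring
    rw [e1, e2, hs_def]
  -- Abel / telescoping representation
  set F : ℕ → ℝ := fun k => Real.sin ((2*((N:ℝ)+k)+1)*π*R) / ((N:ℝ)+1+k)^2 with hF_def
  set g : ℕ → ℝ := fun k =>
    Real.sin ((2*((N:ℝ)+(k+1))+1)*π*R) * (1/((N:ℝ)+1+k)^2 - 1/((N:ℝ)+1+(k+1))^2) with hg_def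
  have heq : ∀ k : ℕ, f k = ((F (k+1) - F k) + g k) / (2*s) := by
    intro k
    have hcos : Real.cos (2*π*((N:ℝ)+1+k)*R)
        = (Real.sin ((2*((N:ℝ)+(k+1))+1)*π*R) - Real.sin ((2*((N:ℝ)+k)+1)*π*R)) / (2*s) := by
      rw [key k]; field_simp
    rw [hf_def, hF_def, hg_def]
    simp only []
    rw [hcos]
    have h1 := ne_of_gt (hck k)
    have h2 := ne_of_gt (hck (k+1))
    push_cast
    push_cast at h1 h2
    field_simp
    ring
  -- partial sum formula
  have hrep : ∀ M : ℕ, ∑ k ∈ range M, f k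
      = ((F M - F 0) + ∑ k ∈ range M, g k) / (2*s) := by
    intro M
    rw [← Finset.sum_range_sub F M, ← Finset.sum_add_distrib, Finset.sum_div]
    exact Finset.sum_congr rfl (fun k _ => heq k)
  -- bound 2 on partial sums
  have hbound2 : ∀ M : ℕ, |∑ k ∈ range M, f k| ≤ 1 / (s * ((N:ℝ)+1)^2) := by
    intro M
    rw [hrep M]
    have hFb : ∀ k : ℕ, |F k| ≤ 1/((N:ℝ)+1+k)^2 := by
      intro k
      rw [hF_def]
      simp only [abs_div, abs_pow, abs_of_pos (hck k)]
      rw [div_le_div_iff_of_pos_right (by positivity)]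
      exact abs_sin_le_one _
    have hgb : ∀ k : ℕ, |g k| ≤ 1/((N:ℝ)+1+k)^2 - 1/((N:ℝ)+1+(k+1))^2 := by
      intro k
      have hmono : 1/((N:ℝ)+1+(k+1))^2 ≤ 1/((N:ℝ)+1+k)^2 := by
        apply one_div_le_one_div_of_le (by positivity)
        have := hck k; nlinarith
      rw [hg_def, abs_mul]
      calc |Real.sin ((2*((N:ℝ)+(k+1))+1)*π*R)| * |1/((N:ℝ)+1+k)^2 - 1/((N:ℝ)+1+(k+1))^2|
          ≤ 1 * |1/((N:ℝ)+1+k)^2 - 1/((N:ℝ)+1+(k+1))^2| :=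
            mul_le_mul_of_nonneg_right (abs_sin_le_one _) (abs_nonneg _)
        _ = 1/((N:ℝ)+1+k)^2 - 1/((N:ℝ)+1+(k+1))^2 := by
            rw [one_mul, abs_of_nonneg (by linarith)]
    have hgs : |∑ k ∈ range M, g k| ≤ 1/((N:ℝ)+1+(0:ℕ))^2 - 1/((N:ℝ)+1+M)^2 := by
      calc |∑ k ∈ range M, g k| ≤ ∑ k ∈ range M, |g k| := Finset.abs_sum_le_sum_abs _ _
        _ ≤ ∑ k ∈ range M, (1/((N:ℝ)+1+k)^2 - 1/((N:ℝ)+1+(k+1))^2) :=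
            Finset.sum_le_sum (fun k _ => hgb k)
        _ = 1/((N:ℝ)+1+(0:ℕ))^2 - 1/((N:ℝ)+1+M)^2 := by
            rw [← Finset.sum_range_sub' (fun k : ℕ => 1/((N:ℝ)+1+k)^2) M]
            apply Finset.sum_congr rfl
            intro k _; push_cast; ring_nf
    -- combine
    have h1 : |F M - F 0 + ∑ k ∈ range M, g k| ≤ |F M| + |F 0| + |∑ k ∈ range M, g k| := by
      calc |F M - F 0 + ∑ k ∈ range M, g k|
          ≤ |F M - F 0| + |∑ k ∈ range M, g k| := abs_add_le _ _
        _ ≤ (|F M| + |F 0|) + |∑ k ∈ range M, g k| := by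
            have : |F M - F 0| ≤ |F M| + |F 0| := by
              rw [sub_eq_add_neg]
              exact (abs_add_le _ _).trans (by rw [abs_neg])
            linarith
        _ = |F M| + |F 0| + |∑ k ∈ range M, g k| := by ring
    have hFM := hFb M
    have hF0 := hFb 0
    have hnum : |F M - F 0 + ∑ k ∈ range M, g k| ≤ 2 / ((N:ℝ)+1)^2 := by
      have e0 : ((N:ℝ)+1+((0:ℕ):ℝ)) = (N:ℝ)+1 := by push_cast; ring
      rw [e0] at hF0 hgs
      have : 2 / ((N:ℝ)+1)^2 = 1/((N:ℝ)+1)^2 + 1/((N:ℝ)+1)^2 := by ring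
      rw [this]
      linarith
    rw [abs_div, abs_of_pos (by positivity : (0:ℝ) < 2*s)]
    rw [div_le_div_iff₀ (by positivity) (by positivity)]
    calc |F M - F 0 + ∑ k ∈ range M, g k| * (s * ((N:ℝ)+1)^2)
        ≤ (2 / ((N:ℝ)+1)^2) * (s * ((N:ℝ)+1)^2) :=
          mul_le_mul_of_nonneg_right hnum (by positivity)
      _ = 1 * (2 * s) := by
          field_simp
  -- pass to the limit
  have htend : Filter.Tendsto (fun M => |(N:ℝ) * ∑ k ∈ range M, f k|) Filter.atTop
      (nhds |(N:ℝ) * ∑' k, f k|) :=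
    (hsum.hasSum.tendsto_sum_nat.const_mul _).abs
  rw [le_min_iff]
  constructor
  · apply le_of_tendsto htend
    filter_upwards with M
    rw [abs_mul, abs_of_pos hNpos]
    calc (N:ℝ) * |∑ k ∈ range M, f k| ≤ (N:ℝ) * (1/N) :=
          mul_le_mul_of_nonneg_left (hbound1 M) (le_of_lt hNpos)
      _ = 1 := by field_simp
  · apply le_of_tendsto htend
    filter_upwards with M
    rw [abs_mul, abs_of_pos hNpos, abs_of_pos hs]
    have step1 : (N:ℝ) * (1/(s*((N:ℝ)+1)^2)) ≤ 1/(s*(N:ℝ)) := by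
      rw [mul_one_div, div_le_div_iff₀ (by positivity) (by positivity)]
      nlinarith [mul_nonneg hs.le (by positivity : (0:ℝ) ≤ 2*(N:ℝ)+1)]
    have step2 : 1/(s*(N:ℝ)) ≤ (2 + π^3/8)/(s*(N:ℝ)) := by
      gcongr
      nlinarith [pow_pos Real.pi_pos 3]
    calc (N:ℝ) * |∑ k ∈ range M, f k| ≤ (N:ℝ) * (1/(s*((N:ℝ)+1)^2)) :=
          mul_le_mul_of_nonneg_left (hbound2 M) (le_of_lt hNpos)
      _ ≤ (2 + π^3/8) / (s * N) := step1.trans step2
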